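/- arXiv:1410.0129 — 2 statements merged into one kernel-verified Lean document; each statement's English description precedes it below -/
import Mathlib

section
/- There exists an irrational number x ∈ [0,1] that is not normal to base 2, such that the closure of {2^n x (mod 1) : n ≥ 1} equals [0,1] and the closure of {3^n x (mod 1) : n ≥ 1} equals [0,1]. -/
open Filter Set
open scoped Classical

/-- The `j`-th digit of `x` in base `b`: `a_j(x) = ⌊b^j x⌋ mod b`. -/
noncomputable def digit (b : ℕ) (x : ℝ) (j : ℕ) : ℕ :=
  (⌊(b : ℝ) ^ j * x⌋ % b).toNat

/-- The number of occurrences of the block `d = (d_1, …, d_k)` among the first `N` digits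
of `x` in base `b`: `#{0 ≤ j ≤ N - k : a_{j+1}(x) = d_1, …, a_{j+k}(x) = d_k}`. -/
noncomputable def blockCount (b : ℕ) (x : ℝ) {k : ℕ} (d : Fin k → ℕ) (N : ℕ) : ℕ :=
  ((Finset.range (N + 1 - k)).filter
    (fun j => ∀ i : Fin k, digit b x (j + 1 + (i : ℕ)) = d i)).card

/-- `x` is normal to base `b` if every block of `k` digits occurs with frequency `b⁻ᵏ`. -/
def IsNormal (b : ℕ) (x : ℝ) : Prop :=
  ∀ k : ℕ, 1 ≤ k → ∀ d : Fin k → ℕ, (∀ i, d i < b) →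
    Tendsto (fun N : ℕ => (blockCount b x d N : ℝ) / (N : ℝ)) atTop
      (nhds (((b : ℝ) ^ k)⁻¹))

/-- The closure of the orbit `{b^n x (mod 1) : n ≥ 1}`. -/
noncomputable def orbitClosure (b : ℕ) (x : ℝ) : Set ℝ :=
  closure {y : ℝ | ∃ n : ℕ, 1 ≤ n ∧ y = Int.fract ((b : ℝ) ^ n * x)}

/-! ### fract membership -/

lemma fract_mem_Ioo_iff {p q y : ℝ} (hp : 0 ≤ p) (hq : q ≤ 1) :
    Int.fract y ∈ Set.Ioo p q ↔ ∃ k : ℤ, y ∈ Set.Ioo ((k : ℝ) + p) ((k : ℝ) + q) := by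
  have hfr : Int.fract y = y - ⌊y⌋ := rfl
  constructor
  · rintro ⟨h1, h2⟩
    exact ⟨⌊y⌋, by rw [hfr] at h1 h2; constructor <;> linarith⟩
  · rintro ⟨k, h1, h2⟩
    have hfl : ⌊y⌋ = k := by
      rw [Int.floor_eq_iff]
      refine ⟨by linarith, by push_cast; linarith⟩
    rw [hfr, hfl]
    constructor <;> linarith

/-! ### hit sets for orbit density -/

def hitSet (b : ℕ) (p q : ℚ) : Set ℝ :=
  ⋃ n : ℕ, ⋃ _ : 1 ≤ n,
    (fun x : ℝ => (b : ℝ) ^ n * x) ⁻¹' (⋃ k : ℤ, Set.Ioo ((k : ℝ) + p) ((k : ℝ) + q))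

lemma hitSet_open (b : ℕ) (p q : ℚ) : IsOpen (hitSet b p q) := by
  apply isOpen_iUnion; intro n; apply isOpen_iUnion; intro _
  exact (isOpen_iUnion fun k => isOpen_Ioo).preimage (continuous_const.mul continuous_id)

lemma hitSet_dense {b : ℕ} (hb : 2 ≤ b) {p q : ℚ} (hp : 0 ≤ p) (hp1 : (p : ℝ) < 1)
    (hpq : p < q) : Dense (hitSet b p q) := by
  rw [dense_iff_inter_open]
  rintro V hV ⟨y, hy⟩
  obtain ⟨ε, hε, hball⟩ := Metric.isOpen_iff.1 hV y hy
  have hb1 : (1 : ℝ) < b := by exact_mod_cast lt_of_lt_of_le one_lt_two hb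
  obtain ⟨n₀, hn₀⟩ := pow_unbounded_of_one_lt (2 / ε) hb1
  set n := n₀ + 1 with hn_def
  have hbn : (0 : ℝ) < (b : ℝ) ^ n := pow_pos (by linarith) n
  have hn : (2 : ℝ) / ε < (b : ℝ) ^ n :=
    hn₀.trans_le (pow_le_pow_right₀ hb1.le (Nat.le_succ _))
  have h2 : 2 < (b : ℝ) ^ n * ε := by
    rw [div_lt_iff₀ hε] at hn; linarith
  set L := (b : ℝ) ^ n * (y - ε) with hL
  set U := (b : ℝ) ^ n * (y + ε) with hU
  have hUL : U - L = 2 * ((b : ℝ) ^ n * ε) := by rw [hU, hL]; ring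
  set k := ⌊L⌋ + 1 with hk
  have hkL : L < (k : ℝ) := by rw [hk]; push_cast; linarith [Int.lt_floor_add_one L]
  have hk2 : (k : ℝ) ≤ L + 1 := by rw [hk]; push_cast; linarith [Int.floor_le L]
  have hpq' : (p : ℝ) < q := by exact_mod_cast hpq
  have hp' : (0 : ℝ) ≤ p := by exact_mod_cast hp
  have hmin : (k : ℝ) + p < min ((k : ℝ) + q) U := by
    apply lt_min (by linarith)
    linarith
  set t := ((k : ℝ) + p + min ((k : ℝ) + q) U) / 2 with ht
  have ht1 : (k : ℝ) + p < t := by rw [ht]; linarith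
  have ht2 : t < (k : ℝ) + q := by
    have := min_le_left ((k : ℝ) + q) U; rw [ht]; linarith
  have ht3 : t < U := by
    have := min_le_right ((k : ℝ) + q) U; rw [ht]; linarith
  have ht4 : L < t := by linarith
  have hx1 : y - ε < t / (b : ℝ) ^ n := by
    rw [lt_div_iff₀ hbn, mul_comm]; exact ht4
  have hx2 : t / (b : ℝ) ^ n < y + ε := by
    rw [div_lt_iff₀ hbn, mul_comm]; exact ht3
  refine ⟨t / (b : ℝ) ^ n, hball ?_, ?_⟩
  · rw [Metric.mem_ball, Real.dist_eq, abs_lt]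
    constructor <;> linarith
  · refine Set.mem_iUnion.2 ⟨n, Set.mem_iUnion.2 ⟨Nat.succ_le_succ (Nat.zero_le _), ?_⟩⟩
    have : (b : ℝ) ^ n * (t / (b : ℝ) ^ n) = t := by field_simp
    simp only [Set.mem_preimage, this]
    exact Set.mem_iUnion.2 ⟨k, ht1, ht2⟩

/-! ### non-normality -/

noncomputable def zcount (x : ℝ) (N : ℕ) : ℕ :=
  ((Finset.range N).filter fun j => digit 2 x (j + 1) = 0).card

lemma digit_zero_of_mem {c : ℤ} {K N j : ℕ} (hKj : K ≤ j) (hjN : j < N) {x : ℝ}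
    (hx : (c : ℝ) / 2 ^ K < x) (hx' : x < (c : ℝ) / 2 ^ K + 1 / 2 ^ N) :
    digit 2 x (j + 1) = 0 := by
  have h2K : (0 : ℝ) < 2 ^ K := by positivity
  set e := j + 1 - K with he_def
  have he : e + K = j + 1 := Nat.sub_add_cancel (by omega)
  have he1 : 1 ≤ e := by omega
  have hpow : (2 : ℝ) ^ (j + 1) = 2 ^ e * 2 ^ K := by rw [← pow_add, he]
  have hle : (2 : ℝ) ^ (j + 1) ≤ 2 ^ N := by
    apply pow_le_pow_right₀ (by norm_num) (by omega)
  have hfloor : ⌊(2 : ℝ) ^ (j + 1) * x⌋ = c * 2 ^ e := by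
    rw [Int.floor_eq_iff]
    constructor
    · push_cast
      calc (c : ℝ) * 2 ^ e = 2 ^ e * 2 ^ K * ((c : ℝ) / 2 ^ K) := by field_simp
      _ ≤ 2 ^ (j + 1) * x := by
          rw [hpow]
          apply mul_le_mul_of_nonneg_left hx.le (by positivity)
    · push_cast
      have h1 : (2 : ℝ) ^ (j + 1) * x < 2 ^ (j + 1) * ((c : ℝ) / 2 ^ K + 1 / 2 ^ N) := by
        apply mul_lt_mul_of_pos_left hx' (by positivity)
      have h2 : (2 : ℝ) ^ (j + 1) * ((c : ℝ) / 2 ^ K + 1 / 2 ^ N)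
          = (c : ℝ) * 2 ^ e + 2 ^ (j + 1) / 2 ^ N := by
        rw [hpow]; field_simp
      have h3 : (2 : ℝ) ^ (j + 1) / 2 ^ N ≤ 1 := by
        rw [div_le_one (by positivity)]; exact hle
      linarith
  have hmod : (c * 2 ^ e) % 2 = 0 := by
    obtain ⟨e', he'⟩ : ∃ e', e = e' + 1 := ⟨e - 1, by omega⟩
    rw [he', pow_succ, ← mul_assoc]
    exact Int.mul_emod_left _ _
  unfold digit
  rw [show ((2 : ℕ) : ℝ) = (2 : ℝ) by norm_num, hfloor,
    show ((2 : ℕ) : ℤ) = (2 : ℤ) by norm_num, hmod]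
  rfl

lemma zcount_ge {c : ℤ} {K N : ℕ} {x : ℝ}
    (hx : (c : ℝ) / 2 ^ K < x) (hx' : x < (c : ℝ) / 2 ^ K + 1 / 2 ^ N) :
    N - K ≤ zcount x N := by
  have hsub : Finset.Ico K N ⊆ (Finset.range N).filter fun j => digit 2 x (j + 1) = 0 := by
    intro j hj
    rw [Finset.mem_Ico] at hj
    rw [Finset.mem_filter, Finset.mem_range]
    exact ⟨hj.2, digit_zero_of_mem hj.1 hj.2 hx hx'⟩
  have := Finset.card_le_card hsub
  rwa [Nat.card_Ico] at this

def NNset (m : ℕ) : Set ℝ := {x : ℝ | ∃ N, m ≤ N ∧ 3 * N < 4 * zcount x N}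

lemma NN_dense (m : ℕ) : Dense (interior (NNset m)) := by
  rw [dense_iff_inter_open]
  rintro V hV ⟨y, hy⟩
  obtain ⟨ε, hε, hball⟩ := Metric.isOpen_iff.1 hV y hy
  obtain ⟨K, hK⟩ := pow_unbounded_of_one_lt (1 / ε) (by norm_num : (1 : ℝ) < 2)
  set c := ⌊(2 : ℝ) ^ K * y⌋ with hc
  set N := max m (4 * K + 1) with hN
  have hmN : m ≤ N := le_max_left _ _
  have hKN : 4 * K + 1 ≤ N := le_max_right _ _
  set J := Set.Ioo ((c : ℝ) / 2 ^ K) ((c : ℝ) / 2 ^ K + 1 / 2 ^ N) with hJ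
  have hJsub : J ⊆ NNset m := by
    rintro x ⟨h1, h2⟩
    refine ⟨N, hmN, ?_⟩
    have hz : N - K ≤ zcount x N := zcount_ge h1 h2
    omega
  have hJint : J ⊆ interior (NNset m) := interior_maximal hJsub isOpen_Ioo
  have h2K : (0 : ℝ) < 2 ^ K := by positivity
  have h2N : (0 : ℝ) < 2 ^ N := by positivity
  have hKε : 1 / (2 : ℝ) ^ K < ε := by
    rw [div_lt_iff₀ hε] at hK
    rw [div_lt_iff₀ h2K]
    nlinarith
  have hNK : (1 : ℝ) / 2 ^ N ≤ 1 / 2 ^ K := by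
    apply div_le_div_of_nonneg_left (by norm_num) h2K
    apply pow_le_pow_right₀ (by norm_num) (by omega)
  have hyA : (c : ℝ) / 2 ^ K ≤ y := by
    rw [div_le_iff₀ h2K, mul_comm]
    exact Int.floor_le _
  have hyA' : y < (c : ℝ) / 2 ^ K + 1 / 2 ^ K := by
    rw [← add_div, lt_div_iff₀ h2K, mul_comm]
    have := Int.lt_floor_add_one ((2 : ℝ) ^ K * y)
    rw [← hc] at this
    push_cast
    exact this
  have hJball : J ⊆ Metric.ball y ε := by
    rintro z ⟨h1, h2⟩
    rw [Metric.mem_ball, Real.dist_eq, abs_lt]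
    constructor <;> linarith
  have hJne : ((c : ℝ) / 2 ^ K + 1 / 2 ^ (N + 1)) ∈ J := by
    constructor
    · have : (0 : ℝ) < 1 / 2 ^ (N + 1) := by positivity
      linarith
    · have : (1 : ℝ) / 2 ^ (N + 1) < 1 / 2 ^ N := by
        apply div_lt_div_of_pos_left (by norm_num) h2N
        rw [pow_succ]; nlinarith
      linarith
  exact ⟨_, hball (hJball hJne), hJint hJne⟩

lemma blockCount_one (x : ℝ) (N : ℕ) :
    blockCount 2 x (fun _ : Fin 1 => 0) N = zcount x N := by
  unfold blockCount zcount
  rw [Nat.add_sub_cancel]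
  congr 1
  apply Finset.filter_congr
  intro j _
  constructor
  · intro h
    have := h 0
    simpa using this
  · intro h i
    have : (i : ℕ) = 0 := by omega
    simpa [this] using h

lemma not_normal_of_mem {x : ℝ} (hx : ∀ m, ∃ N, m ≤ N ∧ 3 * N < 4 * zcount x N) :
    ¬ IsNormal 2 x := by
  intro h
  have h1 := h 1 le_rfl (fun _ => 0) (fun _ => by norm_num)
  simp only [blockCount_one] at h1
  have hval : (((2 : ℕ) : ℝ) ^ 1)⁻¹ = 1 / 2 := by norm_num
  rw [hval] at h1
  have h3 : {N : ℕ | (zcount x N : ℝ) / N < 3 / 4} ∈ atTop :=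
    h1 (Iio_mem_nhds (by norm_num))
  rw [mem_atTop_sets] at h3
  obtain ⟨N₀, hN₀⟩ := h3
  obtain ⟨N, hN1, hN2⟩ := hx (max N₀ 1)
  have hNpos : 0 < N := lt_of_lt_of_le (le_max_right N₀ 1) hN1
  have hNr : (0 : ℝ) < N := by exact_mod_cast hNpos
  have hlt : (zcount x N : ℝ) / N < 3 / 4 := hN₀ N (le_trans (le_max_left _ _) hN1)
  have hgt : (3 : ℝ) / 4 < (zcount x N : ℝ) / N := by
    rw [lt_div_iff₀ hNr]
    have hcast : (3 : ℝ) * N < 4 * zcount x N := by exact_mod_cast hN2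
    linarith
  linarith

/-! ### orbit closure -/

lemma orbit_eq {b : ℕ} {x : ℝ}
    (hx : ∀ p q : ℚ, 0 ≤ (p : ℝ) → (q : ℝ) ≤ 1 → (p : ℝ) < q →
      ∃ n : ℕ, 1 ≤ n ∧ Int.fract ((b : ℝ) ^ n * x) ∈ Set.Ioo (p : ℝ) q) :
    orbitClosure b x = Set.Icc 0 1 := by
  apply Set.Subset.antisymm
  · apply closure_minimal _ isClosed_Icc
    rintro y ⟨n, hn, rfl⟩
    exact ⟨Int.fract_nonneg _, (Int.fract_lt_one _).le⟩
  · intro y hy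
    rw [orbitClosure, Metric.mem_closure_iff]
    intro ε hε
    set α := max 0 (y - ε) with hα
    set β := min 1 (y + ε) with hβ
    have hαβ : α < β := by
      apply max_lt <;> apply lt_min
      · norm_num
      · linarith [hy.1]
      · linarith [hy.2]
      · linarith
    obtain ⟨p, hp1, hp2⟩ := exists_rat_btwn hαβ
    obtain ⟨q, hq1, hq2⟩ := exists_rat_btwn hp2
    have hα0 : 0 ≤ α := le_max_left _ _
    have hβ1 : β ≤ 1 := min_le_left _ _
    obtain ⟨n, hn, hfr⟩ := hx p q (by linarith) (by push_cast at hq2 ⊢; linarith)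
      (by exact_mod_cast hq1)
    refine ⟨Int.fract ((b : ℝ) ^ n * x), ⟨n, hn, rfl⟩, ?_⟩
    rw [Real.dist_eq, abs_lt]
    have hyl : y - ε ≤ α := le_max_right _ _
    have hyu : β ≤ y + ε := min_le_right _ _
    obtain ⟨hf1, hf2⟩ := hfr
    constructor <;> push_cast at hq2 <;> linarith

/-! ### the residual sets -/

def denseOrbitSet (b : ℕ) : Set ℝ :=
  ⋂ r : ℚ × ℚ,
    if 0 ≤ r.1 ∧ r.1 < r.2 ∧ (r.2 : ℚ) ≤ 1 then hitSet b r.1 r.2 else Set.univ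

lemma denseOrbitSet_residual {b : ℕ} (hb : 2 ≤ b) : denseOrbitSet b ∈ residual ℝ := by
  rw [denseOrbitSet]
  rw [countable_iInter_mem]
  intro r
  split_ifs with h
  · obtain ⟨h1, h2, h3⟩ := h
    apply residual_of_dense_open (hitSet_open b r.1 r.2)
    apply hitSet_dense hb h1 _ h2
    have : (r.1 : ℝ) < (r.2 : ℝ) := by exact_mod_cast h2
    have : ((r.2 : ℚ) : ℝ) ≤ 1 := by exact_mod_cast h3
    linarith
  · exact univ_mem

lemma denseOrbitSet_spec {b : ℕ} {x : ℝ} (hx : x ∈ denseOrbitSet b) :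
    ∀ p q : ℚ, 0 ≤ (p : ℝ) → (q : ℝ) ≤ 1 → (p : ℝ) < q →
      ∃ n : ℕ, 1 ≤ n ∧ Int.fract ((b : ℝ) ^ n * x) ∈ Set.Ioo (p : ℝ) q := by
  intro p q hp hq hpq
  have hmem := Set.mem_iInter.1 hx (p, q)
  rw [if_pos ⟨by exact_mod_cast hp, by exact_mod_cast hpq, by exact_mod_cast hq⟩] at hmem
  simp only [hitSet, Set.mem_iUnion, Set.mem_preimage] at hmem
  obtain ⟨n, hn, hmem⟩ := hmem
  refine ⟨n, hn, ?_⟩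
  rw [fract_mem_Ioo_iff hp hq]
  simpa using hmem

theorem stmt3 :
    ∃ x ∈ Set.Icc (0 : ℝ) 1, Irrational x ∧ ¬ IsNormal 2 x ∧
      orbitClosure 2 x = Set.Icc 0 1 ∧ orbitClosure 3 x = Set.Icc 0 1 := by
  set NN : Set ℝ := ⋂ m : ℕ, interior (NNset m) with hNN
  set Irr : Set ℝ := ⋂ q : ℚ, {((q : ℝ))}ᶜ with hIrr
  have hres : denseOrbitSet 2 ∩ denseOrbitSet 3 ∩ NN ∩ Irr ∈ residual ℝ := by
    refine inter_mem (inter_mem (inter_mem ?_ ?_) ?_) ?_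
    · exact denseOrbitSet_residual le_rfl
    · exact denseOrbitSet_residual (by norm_num)
    · rw [hNN, countable_iInter_mem]
      exact fun m => residual_of_dense_open isOpen_interior (NN_dense m)
    · rw [hIrr, countable_iInter_mem]
      exact fun q => residual_of_dense_open (isClosed_singleton.isOpen_compl)
        (dense_compl_singleton _)
  have hdense := dense_of_mem_residual hres
  obtain ⟨x, hxI, hxR⟩ := hdense.exists_mem_open isOpen_Ioo
    (Set.nonempty_Ioo.2 (by norm_num : (0 : ℝ) < 1))
  obtain ⟨⟨⟨hx2, hx3⟩, hxNN⟩, hxIrr⟩ := hxI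
  refine ⟨x, Set.Ioo_subset_Icc_self hxR, ?_, ?_, ?_, ?_⟩
  · rintro ⟨q, rfl⟩
    exact (Set.mem_iInter.1 hxIrr q) rfl
  · apply not_normal_of_mem
    intro m
    have := Set.mem_iInter.1 hxNN m
    exact (interior_subset this : x ∈ NNset m)
  · exact orbit_eq (denseOrbitSet_spec hx2)
  · exact orbit_eq (denseOrbitSet_spec hx3)
end

section
/- There exists an uncountable set E ⊆ [0,1] such that every x ∈ E is not normal to base 2, and for every x ∈ E the closure of {2^n x (mod 1) : n ≥ 1} equals [0,1] and the closure of {3^n x (mod 1) : n ≥ 1} equals [0,1]. -/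
open Filter Set
open scoped Classical

/- ### auxiliary development -/

lemma floor_dyadic {L j : ℕ} (hj : j ≤ L) (K : ℤ) {x : ℝ}
    (h1 : (K : ℝ) / 2 ^ L ≤ x) (h2 : x < ((K : ℝ) + 1) / 2 ^ L) :
    ⌊(2 : ℝ) ^ j * x⌋ = K / 2 ^ (L - j) := by
  have hsplit : (2 : ℝ) ^ L = 2 ^ (L - j) * 2 ^ j := by
    rw [← pow_add]; congr 1; omega
  have hpj : (0:ℝ) < 2 ^ j := by positivity
  have hpLj : (0:ℝ) < 2 ^ (L - j) := by positivity
  set t : ℤ := 2 ^ (L - j) with ht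
  have htpos : 0 < t := by positivity
  have hdm := Int.mul_ediv_add_emod K t
  have hr1 := Int.emod_nonneg K (ne_of_gt htpos)
  have hr2 := Int.emod_lt_of_pos K htpos
  have hmt : (K / t) * t ≤ K := by rw [mul_comm]; linarith
  have hKt : K < (K / t + 1) * t := by
    have he : (K / t + 1) * t = t * (K / t) + t := by ring
    linarith
  have htR : (t : ℤ) = 2 ^ (L - j) := ht
  have htR' : ((t : ℤ) : ℝ) = 2 ^ (L - j) := by rw [ht]; push_cast; norm_num
  rw [Int.floor_eq_iff]
  constructor
  · have h' : ((K / t : ℤ) : ℝ) * 2 ^ (L - j) ≤ (K : ℝ) := by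
      rw [← htR']; exact_mod_cast hmt
    calc ((K / t : ℤ) : ℝ) = ((K / t : ℤ) : ℝ) * 2 ^ (L-j) * 2 ^ j / 2 ^ L := by
          rw [hsplit]; field_simp
      _ ≤ (K:ℝ) * 2 ^ j / 2 ^ L := by
          apply div_le_div_of_nonneg_right _ (by positivity)
          · exact mul_le_mul_of_nonneg_right h' (le_of_lt hpj)
      _ = 2 ^ j * ((K:ℝ)/2^L) := by ring
      _ ≤ 2 ^ j * x := by nlinarith
  · have h' : (K : ℝ) + 1 ≤ (((K / t : ℤ) : ℝ) + 1) * 2 ^ (L - j) := by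
      rw [← htR']
      have hKt' : K + 1 ≤ (K / t + 1) * t := by omega
      exact_mod_cast hKt'
    calc (2:ℝ) ^ j * x < 2 ^ j * (((K:ℝ)+1)/2^L) := by nlinarith
      _ = ((K:ℝ)+1) / 2 ^ (L - j) := by rw [hsplit]; field_simp
      _ ≤ (((K / t : ℤ) : ℝ) + 1) * 2 ^ (L-j) / 2 ^ (L-j) := by
          apply div_le_div_of_nonneg_right h' (by positivity)
      _ = ((K / t : ℤ) : ℝ) + 1 := by field_simp

lemma digit_eq_zero {M₀ M j : ℕ} (k : ℤ) (hj1 : M₀ < j) (hj2 : j ≤ M) {x : ℝ}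
    (h1 : (k : ℝ) / 2 ^ M₀ ≤ x) (h2 : x < (k : ℝ) / 2 ^ M₀ + 1 / 2 ^ M) :
    digit 2 x j = 0 := by
  set K : ℤ := k * 2 ^ (M - M₀) with hK
  have e1 : (K : ℝ) / 2 ^ M = (k : ℝ) / 2 ^ M₀ := by
    have h : (2:ℝ) ^ M = 2 ^ (M - M₀) * 2 ^ M₀ := by rw [← pow_add]; congr 1; omega
    rw [hK]; push_cast; rw [h]; field_simp
  have e2 : ((K : ℝ) + 1) / 2 ^ M = (k : ℝ) / 2 ^ M₀ + 1 / 2 ^ M := by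
    rw [add_div, e1]
  have hf : ⌊(2 : ℝ) ^ j * x⌋ = K / 2 ^ (M - j) :=
    floor_dyadic hj2 K (by rw [e1]; exact h1) (by rw [e2]; exact h2)
  have hdiv : K / 2 ^ (M - j) = k * 2 ^ (j - M₀) := by
    have h : K = k * 2 ^ (j - M₀) * 2 ^ (M - j) := by
      rw [hK, mul_assoc, ← pow_add]; congr 2; omega
    rw [h, Int.mul_ediv_cancel _ (by positivity)]
  have heven : k * 2 ^ (j - M₀) % 2 = 0 := by
    have h2' : (2:ℤ) ^ (j - M₀) = 2 * 2 ^ (j - M₀ - 1) := by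
      rw [← pow_succ']; congr 1; omega
    rw [h2', show k * (2 * 2 ^ (j - M₀ - 1)) = k * 2 ^ (j - M₀ - 1) * 2 by ring]
    exact Int.mul_emod_left _ _
  unfold digit
  have hc : ((2:ℕ):ℝ) = (2:ℝ) := by norm_num
  rw [hc, hf, hdiv]
  simp [heven]

/-- open dense sets forcing long runs of zeros -/
noncomputable def ONN (N : ℕ) : Set ℝ :=
  ⋃ (k : ℤ) (M₀ : ℕ),
    Ioo ((k : ℝ) / 2 ^ M₀) ((k : ℝ) / 2 ^ M₀ + 1 / 2 ^ (4 * (M₀ + N + 1)))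

lemma isOpen_ONN (N : ℕ) : IsOpen (ONN N) :=
  isOpen_iUnion fun _ => isOpen_iUnion fun _ => isOpen_Ioo

lemma dense_ONN (N : ℕ) : Dense (ONN N) := by
  rw [dense_iff_exists_between]
  intro a b hab
  obtain ⟨M₀, hM₀⟩ := exists_pow_lt_of_lt_one (show (0:ℝ) < (b - a)/2 by linarith)
    (show (1:ℝ)/2 < 1 by norm_num)
  have hM₀' : (1:ℝ) / 2 ^ M₀ < (b - a) / 2 := by
    rwa [div_pow, one_pow] at hM₀
  set k : ℤ := ⌊a * 2 ^ M₀⌋ + 1 with hk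
  set M : ℕ := 4 * (M₀ + N + 1) with hM
  have hpM₀ : (0:ℝ) < 2 ^ M₀ := by positivity
  have hpM : (0:ℝ) < 2 ^ M := by positivity
  have hle : (1:ℝ) / 2 ^ M ≤ 1 / 2 ^ M₀ := by
    apply div_le_div_of_nonneg_left (by norm_num) hpM₀
    exact pow_le_pow_right₀ (by norm_num) (by omega)
  have hak : a < (k : ℝ) / 2 ^ M₀ := by
    rw [lt_div_iff₀ hpM₀]
    have h : a * 2 ^ M₀ < (k : ℝ) := by
      rw [hk]; push_cast; linarith [Int.lt_floor_add_one (a * 2 ^ M₀)]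
    linarith
  have hkb : (k : ℝ) / 2 ^ M₀ + 1 / 2 ^ M < b := by
    have h1 : (k : ℝ) ≤ a * 2 ^ M₀ + 1 := by
      rw [hk]; push_cast; linarith [Int.floor_le (a * 2 ^ M₀)]
    have h2 : (k : ℝ) / 2 ^ M₀ ≤ a + 1 / 2 ^ M₀ := by
      rw [div_le_iff₀ hpM₀, add_mul]; field_simp; linarith
    linarith
  refine ⟨(k : ℝ) / 2 ^ M₀ + 1 / 2 ^ (M + 1), ?_, ?_, ?_⟩
  · refine mem_iUnion.2 ⟨k, mem_iUnion.2 ⟨M₀, ?_⟩⟩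
    rw [mem_Ioo]
    refine ⟨by simp only [lt_add_iff_pos_right]; positivity, ?_⟩
    rw [← hM]
    have h : (1:ℝ)/2^(M+1) < 1/2^M := by
      apply div_lt_div_of_pos_left (by norm_num) hpM
      rw [pow_succ]; nlinarith
    linarith
  · have h : (0:ℝ) < 1 / 2 ^ (M+1) := by positivity
    linarith
  · have h : (1:ℝ)/2^(M+1) ≤ 1/2^M := by
      apply div_le_div_of_nonneg_left (by norm_num) hpM
      rw [pow_succ]; nlinarith
    linarith

lemma blockCount_big {N : ℕ} {x : ℝ} (hx : x ∈ ONN N) :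
    ∃ M : ℕ, N ≤ M ∧ 1 ≤ M ∧
      (3/4 : ℝ) < (blockCount 2 x (fun _ : Fin 1 => 0) M : ℝ) / M := by
  obtain ⟨k, hk⟩ := mem_iUnion.1 hx
  obtain ⟨M₀, hM₀⟩ := mem_iUnion.1 hk
  obtain ⟨h1, h2⟩ := hM₀
  set M : ℕ := 4 * (M₀ + N + 1) with hM
  refine ⟨M, by omega, by omega, ?_⟩
  have hsub : Finset.Ico M₀ M ⊆ (Finset.range (M + 1 - 1)).filter
      (fun j => ∀ i : Fin 1, digit 2 x (j + 1 + (i : ℕ)) = (fun _ : Fin 1 => 0) i) := by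
    intro j hj
    rw [Finset.mem_Ico] at hj
    rw [Finset.mem_filter, Finset.mem_range]
    refine ⟨by omega, fun i => ?_⟩
    have hi : (i : ℕ) = 0 := by omega
    rw [hi]
    exact digit_eq_zero k (by omega) (by omega) (le_of_lt h1) h2
  have hcard : M - M₀ ≤ blockCount 2 x (fun _ : Fin 1 => 0) M := by
    have h := Finset.card_le_card hsub
    rwa [Nat.card_Ico] at h
  have hMpos : (0:ℝ) < (M : ℝ) := by positivity
  rw [lt_div_iff₀ hMpos]
  have hcast : ((M : ℝ) - M₀) ≤ (blockCount 2 x (fun _ : Fin 1 => 0) M : ℝ) := by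
    have h : ((M - M₀ : ℕ) : ℝ) ≤ (blockCount 2 x (fun _ : Fin 1 => 0) M : ℝ) := by
      exact_mod_cast hcard
    rwa [Nat.cast_sub (by omega)] at h
  have hMM₀ : (M : ℝ) = 4 * ((M₀ : ℝ) + N + 1) := by rw [hM]; push_cast; ring
  nlinarith [Nat.cast_nonneg (α := ℝ) N, Nat.cast_nonneg (α := ℝ) M₀]

lemma not_isNormal_of_mem {x : ℝ} (hx : ∀ N, x ∈ ONN N) : ¬ IsNormal 2 x := by
  intro h
  have h1 := h 1 le_rfl (fun _ => 0) (fun _ => by norm_num)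
  have hlim : Tendsto (fun N : ℕ => (blockCount 2 x (fun _ : Fin 1 => 0) N : ℝ) / N) atTop
      (nhds (1/2)) := by
    convert h1 using 2
    norm_num
  have hev : ∀ᶠ N : ℕ in atTop,
      (blockCount 2 x (fun _ : Fin 1 => 0) N : ℝ) / N < 3/4 :=
    hlim.eventually_lt_const (by norm_num)
  obtain ⟨N₀, hN₀⟩ := eventually_atTop.1 hev
  obtain ⟨M, hMN, _, hMbig⟩ := blockCount_big (hx N₀)
  exact absurd (hN₀ M hMN) (not_lt.2 (le_of_lt hMbig))

/-- open set of x whose b-orbit hits (p,q) -/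
def VV (b : ℕ) (p q : ℚ) : Set ℝ :=
  ⋃ (n : ℕ) (_ : 1 ≤ n) (m : ℤ),
    Ioo (((m : ℝ) + p) / (b : ℝ) ^ n) (((m : ℝ) + q) / (b : ℝ) ^ n)

lemma isOpen_VV (b : ℕ) (p q : ℚ) : IsOpen (VV b p q) :=
  isOpen_iUnion fun _ => isOpen_iUnion fun _ => isOpen_iUnion fun _ => isOpen_Ioo

lemma dense_VV {b : ℕ} (hb : 2 ≤ b) {p q : ℚ} (hp : 0 < p) (hpq : p < q) (hq : q < 1) :
    Dense (VV b p q) := by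
  rw [dense_iff_exists_between]
  intro a c hac
  have hb1 : (1:ℝ) < (b:ℝ) := by exact_mod_cast by omega
  obtain ⟨n₀, hn₀⟩ := pow_unbounded_of_one_lt ((2:ℝ)/(c - a)) hb1
  set n : ℕ := n₀ + 1 with hn
  have hbn : (0:ℝ) < (b:ℝ) ^ n := by positivity
  have hbig : (2:ℝ)/(c - a) < (b:ℝ) ^ n := by
    calc (2:ℝ)/(c-a) < (b:ℝ)^n₀ := hn₀
      _ ≤ (b:ℝ)^n := by apply pow_le_pow_right₀ (le_of_lt hb1); omega
  have h2lt : 2 < (b:ℝ) ^ n * (c - a) := by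
    rw [div_lt_iff₀ (by linarith)] at hbig; linarith
  set m : ℤ := ⌊(b:ℝ)^n * a⌋ + 1 with hm
  have hma : (b:ℝ)^n * a < (m:ℝ) := by
    rw [hm]; push_cast; linarith [Int.lt_floor_add_one ((b:ℝ)^n * a)]
  have hmb : (m:ℝ) + 1 < (b:ℝ)^n * c := by
    have h : (m:ℝ) ≤ (b:ℝ)^n * a + 1 := by
      rw [hm]; push_cast; linarith [Int.floor_le ((b:ℝ)^n * a)]
    nlinarith
  have hp' : (0:ℝ) < (p:ℝ) := by exact_mod_cast hp
  have hq' : (q:ℝ) < 1 := by exact_mod_cast hq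
  have hpq' : (p:ℝ) < (q:ℝ) := by exact_mod_cast hpq
  refine ⟨((m:ℝ) + ((p:ℝ)+(q:ℝ))/2) / (b:ℝ)^n, ?_, ?_, ?_⟩
  · refine mem_iUnion.2 ⟨n, mem_iUnion.2 ⟨by omega, mem_iUnion.2 ⟨m, ?_⟩⟩⟩
    rw [mem_Ioo]
    constructor
    · gcongr <;> linarith
    · gcongr <;> linarith
  · rw [lt_div_iff₀ hbn, mul_comm]
    linarith
  · rw [div_lt_iff₀ hbn, mul_comm]
    linarith

lemma mem_VV_fract {b : ℕ} (hb : 2 ≤ b) {p q : ℚ} (hp : 0 < p) (hq : q < 1) {x : ℝ}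
    (hx : x ∈ VV b p q) :
    ∃ n : ℕ, 1 ≤ n ∧ Int.fract ((b : ℝ) ^ n * x) ∈ Ioo (p : ℝ) (q : ℝ) := by
  obtain ⟨n, hn⟩ := mem_iUnion.1 hx
  obtain ⟨hn1, hn2⟩ := mem_iUnion.1 hn
  obtain ⟨m, hm⟩ := mem_iUnion.1 hn2
  rw [mem_Ioo] at hm
  have hbn : (0:ℝ) < (b:ℝ) ^ n := by
    have h : (0:ℝ) < (b:ℝ) := by exact_mod_cast (by omega : 0 < b)
    positivity
  have hp' : (0:ℝ) < (p:ℝ) := by exact_mod_cast hp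
  have hq' : (q:ℝ) < 1 := by exact_mod_cast hq
  have h1 : (m:ℝ) + p < (b:ℝ)^n * x := by
    have h := hm.1
    rwa [div_lt_iff₀ hbn, mul_comm] at h
  have h2 : (b:ℝ)^n * x < (m:ℝ) + q := by
    have h := hm.2
    rwa [lt_div_iff₀ hbn, mul_comm] at h
  have hfl : ⌊(b:ℝ)^n * x⌋ = m := by
    apply Int.floor_eq_iff.2
    constructor <;> [linarith; linarith]
  refine ⟨n, hn1, ?_⟩
  rw [Int.fract, hfl, mem_Ioo]
  constructor <;> linarith

lemma orbitClosure_eq {b : ℕ} {x : ℝ}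
    (h : ∀ p q : ℚ, 0 < p → p < q → q < 1 →
      ∃ n : ℕ, 1 ≤ n ∧ Int.fract ((b : ℝ) ^ n * x) ∈ Ioo (p : ℝ) (q : ℝ)) :
    orbitClosure b x = Set.Icc 0 1 := by
  apply subset_antisymm
  · apply closure_minimal _ isClosed_Icc
    rintro y ⟨n, _, rfl⟩
    exact ⟨Int.fract_nonneg _, le_of_lt (Int.fract_lt_one _)⟩
  · have hIoo : Ioo (0:ℝ) 1 ⊆ orbitClosure b x := by
      intro y hy
      rw [orbitClosure, Metric.mem_closure_iff]
      intro ε hε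
      obtain ⟨p, hp1, hp2⟩ := exists_rat_btwn (show max 0 (y - ε) < y by
        rw [max_lt_iff]; exact ⟨hy.1, by linarith⟩)
      obtain ⟨q, hq1, hq2⟩ := exists_rat_btwn (show y < min 1 (y + ε) by
        rw [lt_min_iff]; exact ⟨hy.2, by linarith⟩)
      have hp0 : 0 < p := by
        have h0 : (0:ℝ) ≤ max 0 (y - ε) := le_max_left _ _
        exact_mod_cast lt_of_le_of_lt h0 hp1
      have hq1' : q < 1 := by
        have h0 : min 1 (y + ε) ≤ 1 := min_le_left _ _
        exact_mod_cast lt_of_lt_of_le hq2 h0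
      have hpq : p < q := by exact_mod_cast lt_trans hp2 hq1
      obtain ⟨n, hn1, hn2⟩ := h p q hp0 hpq hq1'
      refine ⟨Int.fract ((b:ℝ)^n * x), ⟨n, hn1, rfl⟩, ?_⟩
      rw [mem_Ioo] at hn2
      rw [Real.dist_eq, abs_lt]
      have h1 : max 0 (y - ε) ≥ y - ε := le_max_right _ _
      have h2 : min 1 (y + ε) ≤ y + ε := min_le_right _ _
      constructor <;> nlinarith
    calc Set.Icc (0:ℝ) 1 = closure (Ioo 0 1) := (closure_Ioo one_ne_zero.symm).symm
      _ ⊆ closure (orbitClosure b x) := closure_mono hIoo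
      _ = orbitClosure b x := closure_closure

/-- gated version of VV for arbitrary rational pairs -/
noncomputable def WW (b : ℕ) (pq : ℚ × ℚ) : Set ℝ :=
  if 0 < pq.1 ∧ pq.1 < pq.2 ∧ pq.2 < 1 then VV b pq.1 pq.2 else univ

lemma WW_mem_residual {b : ℕ} (hb : 2 ≤ b) (pq : ℚ × ℚ) : WW b pq ∈ residual ℝ := by
  unfold WW
  split_ifs with h
  · exact residual_of_dense_open (isOpen_VV b pq.1 pq.2) (dense_VV hb h.1 h.2.1 h.2.2)
  · exact Filter.univ_mem

lemma orbitClosure_of_mem {b : ℕ} (hb : 2 ≤ b) {x : ℝ}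
    (hx : ∀ pq : ℚ × ℚ, x ∈ WW b pq) : orbitClosure b x = Set.Icc 0 1 := by
  apply orbitClosure_eq
  intro p q hp hpq hq
  have h := hx (p, q)
  rw [WW, if_pos ⟨hp, hpq, hq⟩] at h
  exact mem_VV_fract hb hp hq h

theorem stmt9 :
    ∃ E : Set ℝ, E ⊆ Set.Icc 0 1 ∧ ¬ E.Countable ∧
      ∀ x ∈ E, ¬ IsNormal 2 x ∧
        orbitClosure 2 x = Set.Icc 0 1 ∧ orbitClosure 3 x = Set.Icc 0 1 := by
  set G : Set ℝ := (⋂ N, ONN N) ∩ ⋂ pq : ℚ × ℚ, (WW 2 pq ∩ WW 3 pq) with hGdef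
  have hG : G ∈ residual ℝ := by
    apply Filter.inter_mem
    · exact countable_iInter_mem.2 fun N =>
        residual_of_dense_open (isOpen_ONN N) (dense_ONN N)
    · exact countable_iInter_mem.2 fun pq =>
        Filter.inter_mem (WW_mem_residual (by norm_num) pq)
          (WW_mem_residual (by norm_num) pq)
  refine ⟨G ∩ Ioo 0 1, ?_, ?_, ?_⟩
  · exact fun x hx => Ioo_subset_Icc_self hx.2
  · intro hc
    have hEm : IsMeagre (G ∩ Ioo 0 1) := by
      rw [IsMeagre]
      have hsub : (⋂ z ∈ G ∩ Ioo (0:ℝ) 1, ({z}ᶜ : Set ℝ)) ⊆ (G ∩ Ioo 0 1)ᶜ := by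
        intro x hx hxE
        have := mem_iInter₂.1 hx x hxE
        simp at this
      exact Filter.mem_of_superset
        ((countable_bInter_mem hc).2 fun z _ =>
          residual_of_dense_open isOpen_compl_singleton (dense_compl_singleton z)) hsub
    have hGc : IsMeagre Gᶜ := by
      rw [IsMeagre, compl_compl]; exact hG
    have hIoo : IsMeagre (Ioo (0:ℝ) 1) := by
      apply IsMeagre.mono (s := (G ∩ Ioo 0 1) ∪ Gᶜ)
      swap
      · rw [IsMeagre, compl_union]
        exact Filter.inter_mem hEm hGc
      · intro x hx
        by_cases hG' : x ∈ G
        · exact Or.inl ⟨hG', hx⟩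
        · exact Or.inr hG'
    have hdense : Dense ((Ioo (0:ℝ) 1)ᶜ) := dense_of_mem_residual hIoo
    have hclosed : IsClosed ((Ioo (0:ℝ) 1)ᶜ) := isOpen_Ioo.isClosed_compl
    have : ((Ioo (0:ℝ) 1)ᶜ) = univ := by
      rw [← hclosed.closure_eq]; exact hdense.closure_eq
    have h12 : (1/2 : ℝ) ∈ Ioo (0:ℝ) 1 := by norm_num
    have h12' : (1/2 : ℝ) ∈ (Ioo (0:ℝ) 1)ᶜ := this ▸ mem_univ _
    exact h12' h12
  · rintro x ⟨hxG, _⟩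
    obtain ⟨hxO, hxW⟩ := hxG
    refine ⟨not_isNormal_of_mem fun N => mem_iInter.1 hxO N, ?_, ?_⟩
    · exact orbitClosure_of_mem (by norm_num) fun pq => (mem_iInter.1 hxW pq).1
    · exact orbitClosure_of_mem (by norm_num) fun pq => (mem_iInter.1 hxW pq).2
end
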